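/- Let X be a pre-Riesz space and T: X → X a bipositive linear bijection. Then T is disjointness preserving: x ⊥ y implies Tx ⊥ Ty. -/

import Mathlib

/-- Disjointness in a partially ordered vector space. -/
def PDisj {X : Type*} [AddCommGroup X] [PartialOrder X] (x y : X) : Prop :=
  upperBounds {x + y, -x - y} = upperBounds {x - y, -x + y}

/-- A bipositive linear bijection of a pre-Riesz space is disjointness preserving. -/
theorem stmt14 {X : Type*} [AddCommGroup X] [PartialOrder X] [IsOrderedAddMonoid X] [Module ℝ X]
    [PosSMulStrictMono ℝ X]
    (hpr : ∀ x y z : X, upperBounds {x + y, x + z} ⊆ upperBounds {y, z} → 0 ≤ x)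
    (T : X →ₗ[ℝ] X) (hbij : Function.Bijective T)
    (hbi : ∀ x : X, 0 ≤ x ↔ 0 ≤ T x)
    (x y : X) (h : PDisj x y) : PDisj (T x) (T y) := by
  have key : ∀ a b : X, a ≤ b ↔ T a ≤ T b := by
    intro a b
    rw [← sub_nonneg, ← sub_nonneg (b := T a), ← map_sub, ← hbi]
  unfold PDisj at h ⊢
  ext u
  obtain ⟨v, rfl⟩ := hbij.2 u
  have h1 : T v ∈ upperBounds {T x + T y, -T x - T y} ↔ v ∈ upperBounds {x + y, -x - y} := by
    simp only [mem_upperBounds, Set.mem_insert_iff, Set.mem_singleton_iff, forall_eq_or_imp,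
      forall_eq]
    rw [key (x + y) v, key (-x - y) v, map_add, map_sub, map_neg]
  have h2 : T v ∈ upperBounds {T x - T y, -T x + T y} ↔ v ∈ upperBounds {x - y, -x + y} := by
    simp only [mem_upperBounds, Set.mem_insert_iff, Set.mem_singleton_iff, forall_eq_or_imp,
      forall_eq]
    rw [key (x - y) v, key (-x + y) v, map_sub, map_add, map_neg]
  rw [h1, h2, h]
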